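/- The sequent Φ = {νx.φ, νy.ψ} is valid: the disjunction νx.φ ∨ νy.ψ holds at every state of every Kripke model. -/

import Mathlib

set_option linter.unusedVariables false

/-! ## Formulas of the modal μ-calculus -/

inductive Formula : Type
  | prop  : ℕ → Formula
  | nprop : ℕ → Formula
  | var   : ℕ → Formula
  | or    : Formula → Formula → Formula
  | and   : Formula → Formula → Formula
  | dia   : Formula → Formula
  | box   : Formula → Formula
  | mu    : ℕ → Formula → Formula
  | nu    : ℕ → Formula → Formula
  deriving DecidableEq

namespace Formula

/-- Free (formal) variables of a formula. -/
def freeVars : Formula → Finset ℕ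
  | prop _ => ∅
  | nprop _ => ∅
  | var x => {x}
  | or a b => a.freeVars ∪ b.freeVars
  | and a b => a.freeVars ∪ b.freeVars
  | dia a => a.freeVars
  | box a => a.freeVars
  | mu x a => a.freeVars.erase x
  | nu x a => a.freeVars.erase x

/-- A formula is closed if every formal variable is bound. -/
def Closed (φ : Formula) : Prop := φ.freeVars = ∅

/-- Substitution `φ[ψ/x]` (of a closed formula `ψ`, so capture is no issue). -/
def subst : Formula → ℕ → Formula → Formula
  | prop p, _, _ => prop p
  | nprop p, _, _ => nprop p
  | var y, x, ψ => if y = x then ψ else var y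
  | or a b, x, ψ => or (a.subst x ψ) (b.subst x ψ)
  | and a b, x, ψ => and (a.subst x ψ) (b.subst x ψ)
  | dia a, x, ψ => dia (a.subst x ψ)
  | box a, x, ψ => box (a.subst x ψ)
  | mu y a, x, ψ => if y = x then mu y a else mu y (a.subst x ψ)
  | nu y a, x, ψ => if y = x then nu y a else nu y (a.subst x ψ)

/-- The unfolding `φ[μx.φ]` of `μx.φ`. -/
def unfoldMu (x : ℕ) (φ : Formula) : Formula := φ.subst x (mu x φ)

/-- The unfolding `φ[νx.φ]` of `νx.φ`. -/
def unfoldNu (x : ℕ) (φ : Formula) : Formula := φ.subst x (nu x φ)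

/-- `η x. φ` where `η = ν` if `isNu` and `η = μ` otherwise. -/
def eta (isNu : Bool) (x : ℕ) (φ : Formula) : Formula := if isNu then nu x φ else mu x φ

/-- The unfolding `φ[ηx.φ]` of `ηx.φ`. -/
def unfoldEta (isNu : Bool) (x : ℕ) (φ : Formula) : Formula :=
  if isNu then unfoldNu x φ else unfoldMu x φ

/-- The negation (dual) of a formula. -/
def neg : Formula → Formula
  | prop p => nprop p
  | nprop p => prop p
  | var x => var x
  | or a b => and a.neg b.neg
  | and a b => or a.neg b.neg
  | dia a => box a.neg
  | box a => dia a.neg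
  | mu x a => nu x a.neg
  | nu x a => mu x a.neg

end Formula

/-! ## Kripke semantics -/

/-- A Kripke model (transition system with a valuation). -/
structure Kripke (W : Type) where
  rel : W → W → Prop
  val : ℕ → W → Prop

/-- Semantics of a formula in a Kripke model, under an assignment `env` of state
sets to the formal variables; `μ` and `ν` are interpreted as the least and
greatest fixpoints (given here by their Knaster–Tarski descriptions). -/
def sem {W : Type} (M : Kripke W) : Formula → (ℕ → Set W) → Set W
  | .prop p, _ => {w | M.val p w}
  | .nprop p, _ => {w | ¬ M.val p w}
  | .var x, env => env x
  | .or a b, env => sem M a env ∪ sem M b env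
  | .and a b, env => sem M a env ∩ sem M b env
  | .dia a, env => {w | ∃ v, M.rel w v ∧ v ∈ sem M a env}
  | .box a, env => {w | ∀ v, M.rel w v → v ∈ sem M a env}
  | .mu x a, env => ⋂₀ {S : Set W | sem M a (Function.update env x S) ⊆ S}
  | .nu x a, env => ⋃₀ {S : Set W | S ⊆ sem M a (Function.update env x S)}

/-- A sequent: a finite set of formulas (intended: closed formulas),
read disjunctively. -/
abbrev Sequent := Finset Formula

/-- All formulas of the sequent are closed. -/
def ClosedSeq (Γ : Sequent) : Prop := ∀ φ ∈ Γ, φ.Closed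

/-- A sequent is valid if its disjunction holds at every state of every Kripke model. -/
def ValidSeq (Γ : Sequent) : Prop :=
  ∀ (W : Type) (M : Kripke W) (env : ℕ → Set W) (w : W), ∃ φ ∈ Γ, w ∈ sem M φ env

/-! ## Closure, subsumption, adisjunctivity -/

/-- The trace step relation `φ ⤳ ψ`. -/
inductive TStep : Formula → Formula → Prop
  | orL (a b : Formula) : TStep (.or a b) a
  | orR (a b : Formula) : TStep (.or a b) b
  | andL (a b : Formula) : TStep (.and a b) a
  | andR (a b : Formula) : TStep (.and a b) b
  | dia (a : Formula) : TStep (.dia a) a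
  | box (a : Formula) : TStep (.box a) a
  | mu (x : ℕ) (a : Formula) : TStep (.mu x a) (Formula.unfoldMu x a)
  | nu (x : ℕ) (a : Formula) : TStep (.nu x a) (Formula.unfoldNu x a)

/-- The closure of a sequent: least superset closed under `⤳`. -/
def Clos (Γ : Sequent) : Set Formula :=
  {ψ | ∃ φ ∈ Γ, Relation.ReflTransGen TStep φ ψ}

/-- The subsumption order on formal variables (relative to an ambient sequent):
`x ≤ y` iff `x = y` or `x` occurs free in the (ηy.ψ)-formula binding `y`. -/
def VarLe (Γ : Sequent) (x y : ℕ) : Prop :=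
  x = y ∨ ∃ (b : Bool) (φ : Formula),
    Formula.eta b y φ ∈ Clos Γ ∧ x ∈ (Formula.eta b y φ).freeVars

/-- Adisjunctivity of a sequent. -/
def Adisjunctive (Γ : Sequent) : Prop :=
  ∀ (x : ℕ) (φ : Formula), Formula.nu x φ ∈ Clos Γ →
    ∀ ψ₀ ψ₁ : Formula, Formula.or ψ₀ ψ₁ ∈ Clos {Formula.nu x φ} →
      Formula.nu x φ ∉ Clos {ψ₀} ∨ Formula.nu x φ ∉ Clos {ψ₁}

/-! ## The proof system NW -/

/-- An instance of an NW rule (recording context and principal formula). -/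
inductive NWRule : Type
  | ax (p : ℕ)
  | orR (Γ : Sequent) (φ ψ : Formula)
  | andR (Γ : Sequent) (φ ψ : Formula)
  | weak (Γ : Sequent) (φ : Formula)
  | boxR (Γ : Sequent) (φ : Formula)
  | unfold (Γ : Sequent) (isNu : Bool) (x : ℕ) (φ : Formula)

namespace NWRule

/-- Conclusion of a rule instance. -/
def concl : NWRule → Sequent
  | .ax p => {.prop p, .nprop p}
  | .orR Γ φ ψ => insert (.or φ ψ) Γ
  | .andR Γ φ ψ => insert (.and φ ψ) Γ
  | .weak Γ φ => insert φ Γ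
  | .boxR Γ φ => insert (.box φ) (Γ.image Formula.dia)
  | .unfold Γ b x φ => insert (Formula.eta b x φ) Γ

/-- Premises of a rule instance. -/
def prems : NWRule → List Sequent
  | .ax _ => []
  | .orR Γ φ ψ => [insert φ (insert ψ Γ)]
  | .andR Γ φ ψ => [insert φ Γ, insert ψ Γ]
  | .weak Γ _ => [Γ]
  | .boxR Γ φ => [insert φ Γ]
  | .unfold Γ b x φ => [insert (Formula.unfoldEta b x φ) Γ]

/-- The descendant relation of a rule instance: `descends r i a b` holds if the
formula `b` in the `i`-th premise is a descendant of the formula `a` in the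
conclusion. -/
def descends : NWRule → ℕ → Formula → Formula → Prop
  | .ax _, _, _, _ => False
  | .orR Γ φ ψ, _, a, b => (a = .or φ ψ ∧ (b = φ ∨ b = ψ)) ∨ (a ∈ Γ ∧ b = a)
  | .andR Γ φ ψ, i, a, b => (a = .and φ ψ ∧ b = (if i = 0 then φ else ψ)) ∨ (a ∈ Γ ∧ b = a)
  | .weak Γ _, _, a, b => a ∈ Γ ∧ b = a
  | .boxR Γ φ, _, a, b => (a = .box φ ∧ b = φ) ∨ (∃ c ∈ Γ, a = .dia c ∧ b = c)
  | .unfold Γ isNu x φ, _, a, b =>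
      (a = Formula.eta isNu x φ ∧ b = Formula.unfoldEta isNu x φ) ∨ (a ∈ Γ ∧ b = a)

end NWRule

/-- An NW derivation of `Δ`: a (possibly infinite) tree of nodes (addressed by
lists of child indices) respecting the NW rules, all of whose leaves are axioms
(the only rules without premises are axioms). -/
structure NWDeriv (Δ : Sequent) where
  tree : Set (List ℕ)
  root_mem : [] ∈ tree
  prefix_closed : ∀ u n, u ++ [n] ∈ tree → u ∈ tree
  rule : List ℕ → NWRule
  label : List ℕ → Sequent
  label_root : label [] = Δ
  label_concl : ∀ u ∈ tree, label u = (rule u).concl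
  child_iff : ∀ u ∈ tree, ∀ n : ℕ, (u ++ [n] ∈ tree ↔ n < (rule u).prems.length)
  label_child : ∀ u ∈ tree, ∀ n : ℕ, ∀ h : n < (rule u).prems.length,
      label (u ++ [n]) = (rule u).prems.get ⟨n, h⟩

/-- The node at depth `n` on the branch described by the sequence `f` of child
indices. -/
def branchNode (f : ℕ → ℕ) (n : ℕ) : List ℕ := (List.range n).map f

namespace NWDeriv

variable {Δ : Sequent}

/-- `f` describes an infinite branch of the derivation. -/
def IsBranch (π : NWDeriv Δ) (f : ℕ → ℕ) : Prop := ∀ n, branchNode f n ∈ π.tree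

/-- `g` is a trace on the branch `f` starting at depth `k`. -/
def IsTraceOn (π : NWDeriv Δ) (f : ℕ → ℕ) (k : ℕ) (g : ℕ → Formula) : Prop :=
  ∀ n, g n ∈ π.label (branchNode f (k + n)) ∧
    (π.rule (branchNode f (k + n))).descends (f (k + n)) (g n) (g (n + 1))

end NWDeriv

/-- The set of formulas occurring infinitely often in the sequence `g`. -/
def InfOcc (g : ℕ → Formula) : Set Formula := {φ | ∀ N, ∃ n ≥ N, g n = φ}

/-- `g` is a ν-trace: the subsumption-minimal fixpoint formula occurring
infinitely often on it (equivalently, the fixpoint formula occurring infinitely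
often whose closure contains every formula occurring infinitely often) is a
ν-formula. -/
def IsNuTraceSeq (g : ℕ → Formula) : Prop :=
  ∃ (x : ℕ) (φ : Formula), Formula.nu x φ ∈ InfOcc g ∧
    ∀ ψ ∈ InfOcc g, ψ ∈ Clos {Formula.nu x φ}

/-- An NW derivation is a proof if every infinite branch carries a ν-trace. -/
def NWDeriv.IsProof {Δ : Sequent} (π : NWDeriv Δ) : Prop :=
  ∀ f : ℕ → ℕ, π.IsBranch f → ∃ k g, π.IsTraceOn f k g ∧ IsNuTraceSeq g

/-- Finite traces inside a derivation: `TraceRT π u φ v ψ` says there is a trace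
from the formula `φ` at node `u` to the formula `ψ` at node `v`. -/
inductive NWDeriv.TraceRT {Δ : Sequent} (π : NWDeriv Δ) :
    List ℕ → Formula → List ℕ → Formula → Prop
  | refl (u : List ℕ) (φ : Formula) : NWDeriv.TraceRT π u φ u φ
  | step {u : List ℕ} {φ : Formula} {v : List ℕ} {ψ : Formula} {n : ℕ} {χ : Formula} :
      NWDeriv.TraceRT π u φ v ψ → v ++ [n] ∈ π.tree →
      (π.rule v).descends n ψ χ → NWDeriv.TraceRT π u φ (v ++ [n]) χ

/-! ## The concrete sequent Φ -/

/-- The propositional letter `p`. -/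
def pP : Formula := .prop 0
/-- The negated letter `p̄`. -/
def pN : Formula := .nprop 0
/-- `νy.□(p ∧ (□x ∨ ◇y))`, with `x` (variable 0) free. -/
def psiIn : Formula := .nu 1 (.box (.and pP (.or (.box (.var 0)) (.dia (.var 1)))))
/-- `◇(p̄ ∧ (□x ∨ ◇νy.□(p ∧ (□x ∨ ◇y))))`, the body of `νx.φ`. -/
def phiBody : Formula := .dia (.and pN (.or (.box (.var 0)) (.dia psiIn)))
/-- `νx.φ = νx.◇(p̄ ∧ (□x ∨ ◇νy.□(p ∧ (□x ∨ ◇y))))`. -/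
def nuX : Formula := .nu 0 phiBody
/-- `νy.ψ = νy.□(p ∧ (□νx.φ ∨ ◇y))`. -/
def nuY : Formula := psiIn.subst 0 nuX
/-- `□(p ∧ (□νx.φ ∨ ◇y))`, the body of `νy.ψ`. -/
def psiBody : Formula := .box (.and pP (.or (.box nuX) (.dia (.var 1))))
/-- The sequent `Φ = {νx.φ, νy.ψ}`. -/
def PhiSeq : Sequent := {nuX, nuY}
/-- `χ = □νx.φ ∨ ◇νy.ψ`. -/
def chi : Formula := .or (.box nuX) (.dia nuY)
/-- The unfolding `φ[νx.φ]`. -/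
def unfX : Formula := Formula.unfoldNu 0 phiBody
/-- The unfolding `ψ[νy.ψ]`. -/
def unfY : Formula := Formula.unfoldNu 1 psiBody

/-! ## Unfolding trees for NW proofs of Φ -/

namespace NWDeriv

/-- An unfolding node: a node labelled by the sequent Φ. -/
def UnfNode (π : NWDeriv PhiSeq) (u : List ℕ) : Prop := u ∈ π.tree ∧ π.label u = PhiSeq

/-- `v` is a child of `u` in the unfolding tree `T_π`. -/
def TChild (π : NWDeriv PhiSeq) (u v : List ℕ) : Prop :=
  π.UnfNode u ∧ π.UnfNode v ∧ u <+: v ∧ u ≠ v ∧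
    ∀ w, u <+: w → w <+: v → w ≠ u → w ≠ v → ¬ π.UnfNode w

/-- `v` is an x-node (child of `u` in `T_π`): no trace from `νy.ψ` at `u` to
`νx.φ` or `νy.ψ` at `v`. -/
def IsXNode (π : NWDeriv PhiSeq) (u v : List ℕ) : Prop :=
  π.TChild u v ∧ ¬ (π.TraceRT u nuY v nuX ∨ π.TraceRT u nuY v nuY)

/-- `v` is a y-node (child of `u` in `T_π`): no trace from `νx.φ` at `u` to
`νx.φ` or `νy.ψ` at `v`. -/
def IsYNode (π : NWDeriv PhiSeq) (u v : List ℕ) : Prop :=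
  π.TChild u v ∧ ¬ (π.TraceRT u nuX v nuX ∨ π.TraceRT u nuX v nuY)

end NWDeriv

/-! ## The annotated proof system Clo (optionally with cut) -/

/-- Names: `(x, i)` is the `i`-th name for the formal variable `x`. -/
abbrev Name := ℕ × ℕ
/-- Annotations: finite words of names. -/
abbrev Ann := List Name
/-- Annotated formulas `φ^a`. -/
abbrev AFormula := Formula × Ann
/-- Annotated sequents. -/
abbrev ASequent := Finset AFormula

/-- Erase the annotations of an annotated sequent. -/
def stripSeq (Δ : ASequent) : Sequent := Δ.image Prod.fst

/-- Equip each formula of a plain sequent with the empty annotation. -/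
def annSeq (Γ : Sequent) : ASequent := Γ.image (fun φ => (φ, ([] : Ann)))

/-- `a ≤ x`: every name in the annotation `a` is a name of a variable `≤ x`
in the subsumption order (relative to the ambient sequent `Γ₀`). -/
def AnnLe (Γ₀ : Sequent) (a : Ann) (x : ℕ) : Prop := ∀ m ∈ a, VarLe Γ₀ m.1 x

/-- The name `x'` does not appear in the annotated sequent `Δ`. -/
def NameFresh (x' : Name) (Δ : ASequent) : Prop := ∀ φa ∈ Δ, x' ∉ φa.2

/-- An instance of a rule of Clo (with cut), including the bookkeeping
constructor `asm` for discharged assumptions. -/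
inductive CloRule : Type
  | ax (p : ℕ)
  | orR (Γ : ASequent) (φ ψ : Formula) (a : Ann)
  | andR (Γ : ASequent) (φ ψ : Formula) (a : Ann)
  | weak (Γ : ASequent) (φ : Formula) (a : Ann)
  | boxR (Γ : ASequent) (φ : Formula) (a : Ann)
  | unfold (Γ : ASequent) (isNu : Bool) (x : ℕ) (φ : Formula) (a : Ann)
  | exp (l : List (Formula × Ann × Ann))
  | clo (Γ : ASequent) (x : ℕ) (φ : Formula) (a : Ann) (x' : Name)
  | asm (Γ : ASequent) (x : ℕ) (φ : Formula) (a : Ann) (x' : Name)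
  | cut (Γ : ASequent) (A : Formula)

namespace CloRule

/-- Conclusion of a rule instance. -/
def concl : CloRule → ASequent
  | .ax p => {(.prop p, []), (.nprop p, [])}
  | .orR Γ φ ψ a => insert (.or φ ψ, a) Γ
  | .andR Γ φ ψ a => insert (.and φ ψ, a) Γ
  | .weak Γ φ a => insert (φ, a) Γ
  | .boxR Γ φ a => insert (.box φ, a) (Γ.image (fun q => (Formula.dia q.1, q.2)))
  | .unfold Γ b x φ a => insert (Formula.eta b x φ, a) Γ
  | .exp l => (l.map (fun t => (t.1, t.2.2))).toFinset
  | .clo Γ x φ a _ => insert (.nu x φ, a) Γ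
  | .asm Γ x φ a x' => insert (.nu x φ, a ++ [x']) Γ
  | .cut Γ _ => Γ

/-- Premises of a rule instance (a discharged assumption is a leaf). -/
def prems : CloRule → List ASequent
  | .ax _ => []
  | .orR Γ φ ψ a => [insert (φ, a) (insert (ψ, a) Γ)]
  | .andR Γ φ ψ a => [insert (φ, a) Γ, insert (ψ, a) Γ]
  | .weak Γ _ _ => [Γ]
  | .boxR Γ φ a => [insert (φ, a) Γ]
  | .unfold Γ b x φ a => [insert (Formula.unfoldEta b x φ, a) Γ]
  | .exp l => [(l.map (fun t => (t.1, t.2.1))).toFinset]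
  | .clo Γ x φ a x' => [insert (Formula.unfoldNu x φ, a ++ [x']) Γ]
  | .asm _ _ _ _ _ => []
  | .cut Γ A => [insert (A, []) Γ, insert (A.neg, []) Γ]

/-- Side conditions of the rules, relative to the ambient plain sequent `Γ₀`
(used for the subsumption order). -/
def Ok (Γ₀ : Sequent) : CloRule → Prop
  | .unfold _ _ x _ a => AnnLe Γ₀ a x
  | .exp l => ∀ t ∈ l, List.Sublist t.2.1 t.2.2
  | .clo Γ x _ a x' => x'.1 = x ∧ AnnLe Γ₀ a x ∧ NameFresh x' Γ
  | .asm _ x _ _ x' => x'.1 = x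
  | .cut _ A => A.Closed
  | _ => True

/-- Is this rule an instance of exp? -/
def IsExp : CloRule → Prop
  | .exp _ => True
  | _ => False

/-- Is this rule a discharged assumption? -/
def IsAsm : CloRule → Prop
  | .asm _ _ _ _ _ => True
  | _ => False

/-- Is this rule a cut? -/
def IsCut : CloRule → Prop
  | .cut _ _ => True
  | _ => False

/-- The discharge token of a clo rule. -/
def cloToken : CloRule → Option Name
  | .clo _ _ _ _ x' => some x'
  | _ => none

/-- The descendant relation of a rule instance, on plain formulas. -/
def descends : CloRule → ℕ → Formula → Formula → Prop
  | .ax _, _, _, _ => False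
  | .orR Γ φ ψ _, _, c, d => (c = .or φ ψ ∧ (d = φ ∨ d = ψ)) ∨ ((∃ e ∈ Γ, c = e.1) ∧ d = c)
  | .andR Γ φ ψ _, i, c, d =>
      (c = .and φ ψ ∧ d = (if i = 0 then φ else ψ)) ∨ ((∃ e ∈ Γ, c = e.1) ∧ d = c)
  | .weak Γ _ _, _, c, d => (∃ e ∈ Γ, c = e.1) ∧ d = c
  | .boxR Γ φ _, _, c, d => (c = .box φ ∧ d = φ) ∨ (∃ e ∈ Γ, c = .dia e.1 ∧ d = e.1)
  | .unfold Γ b x φ _, _, c, d =>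
      (c = Formula.eta b x φ ∧ d = Formula.unfoldEta b x φ) ∨ ((∃ e ∈ Γ, c = e.1) ∧ d = c)
  | .exp l, _, c, d => (∃ t ∈ l, c = t.1) ∧ d = c
  | .clo Γ x φ _ _, _, c, d =>
      (c = .nu x φ ∧ d = Formula.unfoldNu x φ) ∨ ((∃ e ∈ Γ, c = e.1) ∧ d = c)
  | .asm _ _ _ _ _, _, _, _ => False
  | .cut Γ _, _, c, d => (∃ e ∈ Γ, c = e.1) ∧ d = c

end CloRule

/-- A Clo derivation of the annotated sequent `Δ₀` (a possibly infinite tree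
respecting the rules of Clo, whose leaves are axioms or discharged
assumptions).  If `cut = false` the cut rule is not allowed. -/
structure CloDeriv (cut : Bool) (Δ₀ : ASequent) where
  tree : Set (List ℕ)
  root_mem : [] ∈ tree
  prefix_closed : ∀ u n, u ++ [n] ∈ tree → u ∈ tree
  rule : List ℕ → CloRule
  label : List ℕ → ASequent
  label_root : label [] = Δ₀
  label_concl : ∀ u ∈ tree, label u = (rule u).concl
  child_iff : ∀ u ∈ tree, ∀ n : ℕ, (u ++ [n] ∈ tree ↔ n < (rule u).prems.length)
  label_child : ∀ u ∈ tree, ∀ n : ℕ, ∀ h : n < (rule u).prems.length,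
      label (u ++ [n]) = (rule u).prems.get ⟨n, h⟩
  ok : ∀ u ∈ tree, (rule u).Ok (stripSeq Δ₀)
  cut_ok : ∀ u ∈ tree, (rule u).IsCut → cut = true
  token_unique : ∀ u ∈ tree, ∀ v ∈ tree, ∀ x' : Name,
      (rule u).cloToken = some x' → (rule v).cloToken = some x' → u = v
  discharged : ∀ u ∈ tree, ∀ (Γ : ASequent) (x : ℕ) (φ : Formula) (a : Ann) (x' : Name),
      rule u = .asm Γ x φ a x' →
      ∃ v, v <+: u ∧ v ≠ u ∧ v ∈ tree ∧ rule v = .clo Γ x φ a x'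

namespace CloDeriv

variable {c : Bool} {Δ₀ : ASequent}

/-- Finite traces (of plain formulas) inside a Clo derivation. -/
inductive TraceRT (ρ : CloDeriv c Δ₀) : List ℕ → Formula → List ℕ → Formula → Prop
  | refl (u : List ℕ) (φ : Formula) : TraceRT ρ u φ u φ
  | step {u : List ℕ} {φ : Formula} {v : List ℕ} {ψ : Formula} {n : ℕ} {χ : Formula} :
      TraceRT ρ u φ v ψ → v ++ [n] ∈ ρ.tree →
      (ρ.rule v).descends n ψ χ → TraceRT ρ u φ (v ++ [n]) χ

end CloDeriv

/-- A Clo derivation of the plain sequent `Φ` (all annotations at the root empty). -/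
abbrev CloDerivPhi := CloDeriv false (annSeq PhiSeq)

namespace CloDeriv

/-- Unfolding node of a Clo derivation of Φ: labelled by (an annotated version
of) the sequent Φ and not by the rule exp. -/
def UnfNode (ρ : CloDerivPhi) (u : List ℕ) : Prop :=
  u ∈ ρ.tree ∧ stripSeq (ρ.label u) = PhiSeq ∧ ¬ (ρ.rule u).IsExp

/-- `v` is a child of `u` in the unfolding tree `T_ρ`. -/
def TChild (ρ : CloDerivPhi) (u v : List ℕ) : Prop :=
  ρ.UnfNode u ∧ ρ.UnfNode v ∧ u <+: v ∧ u ≠ v ∧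
    ∀ w, u <+: w → w <+: v → w ≠ u → w ≠ v → ¬ ρ.UnfNode w

/-- `v` is an x-node (child of `u` in `T_ρ`). -/
def IsXNode (ρ : CloDerivPhi) (u v : List ℕ) : Prop :=
  ρ.TChild u v ∧ ¬ (ρ.TraceRT u nuY v nuX ∨ ρ.TraceRT u nuY v nuY)

/-- `v` is a y-node (child of `u` in `T_ρ`). -/
def IsYNode (ρ : CloDerivPhi) (u v : List ℕ) : Prop :=
  ρ.TChild u v ∧ ¬ (ρ.TraceRT u nuX v nuX ∨ ρ.TraceRT u nuX v nuY)

/-- A root-like unfolding node: no node in the subtree rooted at `u` is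
discharged by a clo rule applied at a proper ancestor of `u`. -/
def RootLike (ρ : CloDerivPhi) (u : List ℕ) : Prop :=
  ρ.UnfNode u ∧ ∀ w ∈ ρ.tree, u <+: w →
    ∀ (Γ : ASequent) (x : ℕ) (φ : Formula) (a : Ann) (x' : Name),
      ρ.rule w = .asm Γ x φ a x' →
      ∀ v ∈ ρ.tree, (ρ.rule v).cloToken = some x' → ¬ (v <+: u ∧ v ≠ u)

end CloDeriv

/-! ## Obtaining Clo derivations from NW proofs -/

/-- Erasing annotations from a Clo rule instance gives an NW rule instance
(clo becomes a ν-unfolding); exp and discharged assumptions are erased. -/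
def CloRule.strip : CloRule → Option NWRule
  | .ax p => some (.ax p)
  | .orR Γ φ ψ _ => some (.orR (stripSeq Γ) φ ψ)
  | .andR Γ φ ψ _ => some (.andR (stripSeq Γ) φ ψ)
  | .weak Γ φ _ => some (.weak (stripSeq Γ) φ)
  | .boxR Γ φ _ => some (.boxR (stripSeq Γ) φ)
  | .unfold Γ b x φ _ => some (.unfold (stripSeq Γ) b x φ)
  | .exp _ => none
  | .clo Γ x φ _ _ => some (.unfold (stripSeq Γ) true x φ)
  | .asm _ _ _ _ _ => none
  | .cut _ _ => none

/-- `ρ` is obtained from the NW proof `π` by changing some ν-unfoldings into clo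
rules with discharged assumptions (pruning the tree there) and adding
annotations and exp rules: witnessed by a structure-preserving map `e` from the
nodes of `ρ` to the nodes of `π` that collapses the inserted exp nodes, matches
the labels up to annotations, and matches the rules up to annotations (with clo
read as ν-unfolding). -/
def Obtains {Γ : Sequent} (π : NWDeriv Γ) (ρ : CloDeriv false (annSeq Γ)) : Prop :=
  ∃ e : List ℕ → List ℕ,
    e [] = [] ∧
    (∀ u ∈ ρ.tree, e u ∈ π.tree) ∧
    (∀ u ∈ ρ.tree, stripSeq (ρ.label u) = π.label (e u)) ∧
    (∀ u ∈ ρ.tree, (ρ.rule u).IsExp → e (u ++ [0]) = e u) ∧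
    (∀ u ∈ ρ.tree, ¬ (ρ.rule u).IsExp → ∀ n : ℕ, u ++ [n] ∈ ρ.tree →
        e (u ++ [n]) = e u ++ [n]) ∧
    (∀ u ∈ ρ.tree, ∀ r : NWRule, (ρ.rule u).strip = some r → π.rule (e u) = r)

/-! ## The infinite unfolding of a Clo proof -/

/-- `Resolves u w`: in the infinite unfolding with exp nodes removed, the node
`u` of the original Clo derivation is represented by the node `w`, obtained by
skipping exp rules and replacing discharged assumptions by their companions. -/
inductive CloDeriv.Resolves {c : Bool} {Δ₀ : ASequent} (ρ : CloDeriv c Δ₀) :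
    List ℕ → List ℕ → Prop
  | base {u : List ℕ} : u ∈ ρ.tree → ¬ (ρ.rule u).IsExp → ¬ (ρ.rule u).IsAsm →
      CloDeriv.Resolves ρ u u
  | exp {u w : List ℕ} : u ∈ ρ.tree → (ρ.rule u).IsExp →
      CloDeriv.Resolves ρ (u ++ [0]) w → CloDeriv.Resolves ρ u w
  | asm {u v w : List ℕ} {Γ : ASequent} {x : ℕ} {φ : Formula} {a : Ann} {x' : Name} :
      u ∈ ρ.tree → ρ.rule u = .asm Γ x φ a x' →
      v ∈ ρ.tree → (ρ.rule v).cloToken = some x' →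
      CloDeriv.Resolves ρ v w → CloDeriv.Resolves ρ u w

/-- `π` is the NW derivation obtained from the infinite unfolding of the Clo
derivation `ρ` by replacing clo rules by ν-unfoldings, removing exp nodes and
erasing all annotations: witnessed by a map `f` sending each node of `π` to the
node of `ρ` it comes from, commuting with the resolution of exp nodes and of
discharged assumptions by their companions. -/
def IsUnfoldedStrip {Γ : Sequent} (ρ : CloDeriv false (annSeq Γ)) (π : NWDeriv Γ) : Prop :=
  ∃ f : List ℕ → List ℕ,
    ρ.Resolves [] (f []) ∧
    (∀ u ∈ π.tree, f u ∈ ρ.tree) ∧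
    (∀ u ∈ π.tree, stripSeq (ρ.label (f u)) = π.label u) ∧
    (∀ u ∈ π.tree, (ρ.rule (f u)).strip = some (π.rule u)) ∧
    (∀ u ∈ π.tree, ∀ n : ℕ, u ++ [n] ∈ π.tree → ρ.Resolves (f u ++ [n]) (f (u ++ [n])))

/-- The sequent Φ = {νx.φ, νy.ψ} is valid: νx.φ ∨ νy.ψ holds at
every state of every Kripke model. -/
theorem Phi_valid : ValidSeq PhiSeq := by
  intro W M env w
  classical
  set S0 : Set W := {w | ∃ v, M.rel w v ∧ ¬ M.val 0 v} with hS0def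
  set T0 : Set W := {w | ∀ v, M.rel w v → M.val 0 v} with hT0def
  have hTS : ∀ z : W, z ∉ S0 → z ∈ T0 := by
    intro z hz v hv
    by_contra hp
    exact hz ⟨v, hv, hp⟩
  -- □p is a postfixpoint for the inner ν y (with x interpreted as S0)
  have hA : ∀ env : ℕ → Set W, S0 ⊆ sem M nuX env := by
    intro env t ht
    refine Set.mem_sUnion.mpr ⟨S0, ?_, ht⟩
    rintro s ⟨v, hv, hpv⟩
    refine ⟨v, hv, hpv, ?_⟩
    by_cases h : ∀ u, M.rel v u → u ∈ S0
    · left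
      intro u hu
      simpa [Function.update, sem, Formula.subst] using h u hu
    · right
      push_neg at h
      obtain ⟨u, hu, hunS⟩ := h
      refine ⟨u, hu, ?_⟩
      refine Set.mem_sUnion.mpr ⟨T0, ?_, hTS u hunS⟩
      intro t' ht' z hz
      refine ⟨ht' z hz, ?_⟩
      by_cases h2 : ∀ y, M.rel z y → y ∈ S0
      · left
        intro y hy
        simpa [Function.update, sem, Formula.subst] using h2 y hy
      · right
        push_neg at h2
        obtain ⟨y, hy, hynS⟩ := h2
        refine ⟨y, hy, ?_⟩
        simpa [Function.update, sem, Formula.subst] using hTS y hynS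
  have hB : T0 ⊆ sem M nuY env := by
    intro t ht
    refine Set.mem_sUnion.mpr ⟨T0, ?_, ht⟩
    intro t' ht' z hz
    refine ⟨ht' z hz, ?_⟩
    by_cases h : ∃ y, M.rel z y ∧ y ∈ T0
    · right
      obtain ⟨y, hy, hyT⟩ := h
      exact ⟨y, hy, by simpa [Function.update, sem, Formula.subst] using hyT⟩
    · left
      push_neg at h
      intro y hy
      have hyS : y ∈ S0 := by
        by_contra hyn
        exact h y hy (hTS y hyn)
      exact hA _ hyS
  by_cases hw : w ∈ S0
  · exact ⟨nuX, by simp [PhiSeq], hA env hw⟩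
  · exact ⟨nuY, by simp [PhiSeq], hB (hTS w hw)⟩
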